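/- For every r ∈ (0,1], the quantity −p^ε(r) converges to V(r) as ε → 0⁺; that is, lim_{ε→0⁺} (1/ε) · r^{−(n−1)} e^{−r/ε} ∫_0^r s^{n−1} e^{s/ε} V(s) ds = V(r). -/

import Mathlib

open Filter Set Real

lemma pow_diff_le (m : ℕ) {s r : ℝ} (hs : 0 ≤ s) (hsr : s ≤ r) (hr1 : r ≤ 1) :
    r ^ m - s ^ m ≤ m * (r - s) := by
  induction m with
  | zero => simp
  | succ k ih =>
    have hsk : s ^ k ≤ 1 := pow_le_one₀ hs (hsr.trans hr1)
    have hrk : (0:ℝ) ≤ r ^ k := pow_nonneg (hs.trans hsr) k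
    have : r ^ (k+1) - s ^ (k+1) = r * (r ^ k - s ^ k) + (r - s) * s ^ k := by ring
    have hle : s ^ k ≤ r ^ k := pow_le_pow_left₀ hs hsr k
    push_cast
    nlinarith [pow_nonneg hs k]

lemma int_exp (r ε : ℝ) (hε : 0 < ε) :
    ∫ s in (0:ℝ)..r, Real.exp ((s - r)/ε) = ε * (1 - Real.exp (-r/ε)) := by
  have key : ∀ x : ℝ, HasDerivAt (fun s => ε * Real.exp ((s - r)/ε)) (Real.exp ((x - r)/ε)) x := by
    intro x
    have h1 : HasDerivAt (fun s : ℝ => (s - r)/ε) (1/ε) x := by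
      simpa using ((hasDerivAt_id x).sub_const r).div_const ε
    have := (h1.exp).const_mul ε
    refine this.congr_deriv ?_
    field_simp
  rw [intervalIntegral.integral_eq_sub_of_hasDerivAt (fun x _ => key x)
    ((continuous_exp.comp (by continuity)).intervalIntegrable 0 r)]
  simp [Real.exp_ne_zero, mul_sub]

lemma int_lin_exp (r ε : ℝ) (hε : 0 < ε) (hr : 0 ≤ r) :
    ∫ s in (0:ℝ)..r, (r - s) * Real.exp ((s - r)/ε) ≤ ε ^ 2 := by
  have key : ∀ x : ℝ, HasDerivAt (fun s => (ε * (r - s) + ε^2) * Real.exp ((s - r)/ε))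
      ((x - r)/ε |> fun y => (r - x) * Real.exp y) x := by
    intro x
    have h1 : HasDerivAt (fun s : ℝ => (s - r)/ε) (1/ε) x := by
      simpa using ((hasDerivAt_id x).sub_const r).div_const ε
    have h2 : HasDerivAt (fun s : ℝ => ε * (r - s) + ε^2) (-ε) x := by
      simpa using (((hasDerivAt_id x).const_sub r).const_mul ε).add_const (ε^2)
    have := h2.mul h1.exp
    refine this.congr_deriv ?_
    field_simp
    ring
  have heq := intervalIntegral.integral_eq_sub_of_hasDerivAt (fun x _ => key x)
    (((continuous_const.sub continuous_id).mul
      (continuous_exp.comp (by continuity))).intervalIntegrable 0 r)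
  simp only at heq
  rw [heq]
  simp only [sub_self, zero_div, Real.exp_zero, sub_zero, mul_zero, zero_add, mul_one]
  have h3 : 0 ≤ (ε * r + ε^2) * Real.exp ((0 - r)/ε) := by positivity
  nlinarith [Real.exp_nonneg ((0 - r)/ε)]


/-- For every `r ∈ (0,1]`, the quantity `-p^ε(r)` converges to `V r` as
`ε → 0⁺`, where `p^ε(r) = -(1/ε) · r^{-(n-1)} e^{-r/ε} ∫_0^r s^{n-1} e^{s/ε} V(s) ds`. -/
theorem eikonal_minus_p_eps_tendsto_V
    (n : ℕ) (hn : 1 ≤ n) (V : ℝ → ℝ)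
    (hV0 : ∀ s ∈ Set.Icc (0:ℝ) 1, 0 ≤ V s)
    (hVb : ∃ M : ℝ, ∀ s ∈ Set.Icc (0:ℝ) 1, |V s| ≤ M)
    (hVlip : ∃ K : NNReal, LipschitzOnWith K V (Set.Icc 0 1))
    (r : ℝ) (hr : r ∈ Set.Ioc (0:ℝ) 1) :
    Filter.Tendsto
      (fun ε : ℝ =>
        (1/ε) * (r ^ (n-1))⁻¹ * Real.exp (-r/ε) *
          ∫ s in (0:ℝ)..r, s ^ (n-1) * Real.exp (s/ε) * V s)
      (nhdsWithin 0 (Set.Ioi 0)) (nhds (V r)) := by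
  obtain ⟨M, hM⟩ := hVb
  obtain ⟨K, hK⟩ := hVlip
  obtain ⟨hr0, hr1⟩ := hr
  have hrmem : r ∈ Set.Icc (0:ℝ) 1 := ⟨hr0.le, hr1⟩
  have hM0 : 0 ≤ M := (abs_nonneg _).trans (hM r hrmem)
  have hrp : (0:ℝ) < r ^ (n-1) := pow_pos hr0 _
  have hVcont : ContinuousOn V (Set.Icc 0 1) := hK.continuousOn
  have hsub : Set.uIcc (0:ℝ) r ⊆ Set.Icc 0 1 := by
    rw [Set.uIcc_of_le hr0.le]; exact Set.Icc_subset_Icc le_rfl hr1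
  set m := n - 1 with hm
  set L : ℝ := (m : ℝ) * M / r ^ m + (K : ℝ) with hL
  have hL0 : 0 ≤ L := by positivity
  -- pointwise Lipschitz bound for the rescaled density
  have hpt : ∀ s ∈ Set.Icc (0:ℝ) r, |s ^ m * V s / r ^ m - V r| ≤ L * (r - s) := by
    intro s ⟨hs0, hsr⟩
    have hsmem : s ∈ Set.Icc (0:ℝ) 1 := ⟨hs0, hsr.trans hr1⟩
    have hd : s ^ m * V s / r ^ m - V r
        = (s ^ m - r ^ m) * V s / r ^ m + (V s - V r) := by field_simp; ring
    have h1 : |(s ^ m - r ^ m) * V s / r ^ m| ≤ (m : ℝ) * M / r ^ m * (r - s) := by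
      rw [abs_div, abs_mul, abs_of_pos hrp]
      rw [div_le_iff₀ hrp]
      have h2 : |s ^ m - r ^ m| ≤ (m : ℝ) * (r - s) := by
        rw [abs_sub_comm, abs_of_nonneg (by nlinarith [pow_le_pow_left₀ hs0 hsr m])]
        exact pow_diff_le m hs0 hsr hr1
      calc |s ^ m - r ^ m| * |V s| ≤ ((m : ℝ) * (r - s)) * M :=
            mul_le_mul h2 (hM s hsmem) (abs_nonneg _)
              (mul_nonneg (Nat.cast_nonneg m) (by linarith))
        _ = (m : ℝ) * M / r ^ m * (r - s) * r ^ m := by field_simp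
    have h3 : |V s - V r| ≤ (K : ℝ) * (r - s) := by
      have h4 := hK.dist_le_mul s hsmem r hrmem
      rw [Real.dist_eq, Real.dist_eq, abs_sub_comm s r,
        abs_of_nonneg (by linarith : (0:ℝ) ≤ r - s)] at h4
      exact h4
    calc |s ^ m * V s / r ^ m - V r| ≤ |(s ^ m - r ^ m) * V s / r ^ m| + |V s - V r| := by
          rw [hd]; exact abs_add_le _ _
      _ ≤ (m : ℝ) * M / r ^ m * (r - s) + (K : ℝ) * (r - s) := add_le_add h1 h3
      _ = L * (r - s) := by rw [hL]; ring
  -- key estimate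
  have key : ∀ ε : ℝ, ε ∈ Set.Ioi (0:ℝ) →
      |(1/ε) * (r ^ m)⁻¹ * Real.exp (-r/ε) *
          (∫ s in (0:ℝ)..r, s ^ m * Real.exp (s/ε) * V s)
        - V r * (1 - Real.exp (-r/ε))| ≤ L * ε := by
    intro ε hε
    rw [Set.mem_Ioi] at hε
    have hεne : ε ≠ 0 := hε.ne'
    -- integrability facts
    have hiV : IntervalIntegrable (fun s => s ^ m * Real.exp (s/ε) * V s) MeasureTheory.volume 0 r :=
      (((continuous_pow m).continuousOn.mul
        (Real.continuous_exp.comp (continuous_id.div_const ε)).continuousOn).mul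
        (hVcont.mono hsub)).intervalIntegrable
    have hcexp : Continuous fun s : ℝ => Real.exp ((s - r)/ε) :=
      Real.continuous_exp.comp ((continuous_id.sub continuous_const).div_const ε)
    have hiA : IntervalIntegrable (fun s => Real.exp ((s - r)/ε) * (s ^ m * V s / r ^ m))
        MeasureTheory.volume 0 r :=
      (hcexp.continuousOn.mul (((continuous_pow m).continuousOn.mul
        (hVcont.mono hsub)).div_const _)).intervalIntegrable
    have hiB : IntervalIntegrable (fun s => Real.exp ((s - r)/ε) * V r)
        MeasureTheory.volume 0 r := (hcexp.continuousOn.mul continuousOn_const).intervalIntegrable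
    -- step 1 : rewrite main term
    have step1 : (1/ε) * (r ^ m)⁻¹ * Real.exp (-r/ε) *
          (∫ s in (0:ℝ)..r, s ^ m * Real.exp (s/ε) * V s)
        = (1/ε) * ∫ s in (0:ℝ)..r, Real.exp ((s - r)/ε) * (s ^ m * V s / r ^ m) := by
      rw [mul_assoc (1/ε), mul_assoc (1/ε)]
      congr 1
      rw [← intervalIntegral.integral_const_mul]
      apply intervalIntegral.integral_congr
      intro s _
      dsimp only
      have hee : Real.exp ((s - r)/ε) = Real.exp (s/ε) * Real.exp (-r/ε) := by
        rw [← Real.exp_add]; ring_nf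
      rw [hee]; field_simp
    -- step 2 : rewrite the constant term
    have step2 : V r * (1 - Real.exp (-r/ε))
        = (1/ε) * ∫ s in (0:ℝ)..r, Real.exp ((s - r)/ε) * V r := by
      rw [intervalIntegral.integral_mul_const, int_exp r ε hε]
      field_simp
    rw [step1, step2, ← mul_sub, ← intervalIntegral.integral_sub hiA hiB]
    have hbound : |∫ s in (0:ℝ)..r,
        (Real.exp ((s - r)/ε) * (s ^ m * V s / r ^ m) - Real.exp ((s - r)/ε) * V r)|
        ≤ L * ε ^ 2 := by
      have h1 : |∫ s in (0:ℝ)..r, (Real.exp ((s - r)/ε) * (s ^ m * V s / r ^ m)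
            - Real.exp ((s - r)/ε) * V r)|
          ≤ ∫ s in (0:ℝ)..r, L * ((r - s) * Real.exp ((s - r)/ε)) := by
        apply intervalIntegral.abs_integral_le_integral_abs hr0.le |>.trans
        apply intervalIntegral.integral_mono_on hr0.le ((hiA.sub hiB).abs)
        · exact (continuous_const.mul ((continuous_const.sub continuous_id).mul
            hcexp)).intervalIntegrable 0 r
        · intro s hs
          rw [← mul_sub, abs_mul, abs_of_nonneg (Real.exp_nonneg _)]
          calc Real.exp ((s - r)/ε) * |s ^ m * V s / r ^ m - V r|
              ≤ Real.exp ((s - r)/ε) * (L * (r - s)) :=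
                mul_le_mul_of_nonneg_left (hpt s hs) (Real.exp_nonneg _)
            _ = L * ((r - s) * Real.exp ((s - r)/ε)) := by ring
      refine h1.trans ?_
      rw [intervalIntegral.integral_const_mul]
      exact mul_le_mul_of_nonneg_left (int_lin_exp r ε hε hr0.le) hL0
    rw [abs_mul, abs_of_pos (by positivity : (0:ℝ) < 1/ε)]
    calc (1/ε) * |∫ s in (0:ℝ)..r, (Real.exp ((s - r)/ε) * (s ^ m * V s / r ^ m)
          - Real.exp ((s - r)/ε) * V r)| ≤ (1/ε) * (L * ε ^ 2) :=
          mul_le_mul_of_nonneg_left hbound (by positivity)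
      _ = L * ε := by field_simp
  -- limits
  have hexp : Tendsto (fun ε : ℝ => Real.exp (-r/ε)) (nhdsWithin 0 (Set.Ioi 0)) (nhds 0) := by
    have h1 : Tendsto (fun ε : ℝ => r/ε) (nhdsWithin 0 (Set.Ioi 0)) atTop := by
      simp only [div_eq_mul_inv]
      exact tendsto_inv_nhdsGT_zero.const_mul_atTop hr0
    have h2 := Real.tendsto_exp_neg_atTop_nhds_zero.comp h1
    simpa [Function.comp_def, neg_div] using h2
  have hterm : Tendsto (fun ε : ℝ => V r * (1 - Real.exp (-r/ε)))
      (nhdsWithin 0 (Set.Ioi 0)) (nhds (V r)) := by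
    have := (tendsto_const_nhds (x := (1:ℝ)) (f := nhdsWithin (0:ℝ) (Set.Ioi 0))).sub hexp
    have h2 := (tendsto_const_nhds (x := V r) (f := nhdsWithin (0:ℝ) (Set.Ioi 0))).mul this
    simpa using h2
  have hE : Tendsto (fun ε : ℝ =>
      (1/ε) * (r ^ m)⁻¹ * Real.exp (-r/ε) *
          (∫ s in (0:ℝ)..r, s ^ m * Real.exp (s/ε) * V s)
        - V r * (1 - Real.exp (-r/ε))) (nhdsWithin 0 (Set.Ioi 0)) (nhds 0) := by
    have hg : Tendsto (fun ε : ℝ => L * ε) (nhdsWithin 0 (Set.Ioi 0)) (nhds 0) := by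
      have h5 : Tendsto (fun ε : ℝ => L * ε) (nhds 0) (nhds (L * 0)) :=
        (continuous_const.mul continuous_id).tendsto 0
      simpa using h5.mono_left nhdsWithin_le_nhds
    exact squeeze_zero_norm'
      (eventually_nhdsWithin_of_forall (fun ε hε => by
        rw [Real.norm_eq_abs]; exact key ε hε)) hg
  have := hterm.add hE
  simp only [add_zero] at this
  convert this using 2 with ε
  ring
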